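/- arXiv:1009.5580 — 3 statements merged into one kernel-verified Lean document; each statement's English description precedes it below -/
import Mathlib

section
/- Let E be a real Banach space, let 0 < λ ≤ 1, and let u : E → C_λ[0,1] be a bounded linear operator into the Hölder space C_λ[0,1]. Then for every k ∈ ℕ, e_k(u : E → C[0,1]) ≤ 2 · ‖u : E → C_λ[0,1]‖^{1/(2λ+1)} · e_k(u : E → L₂[0,1])^{2λ/(2λ+1)}, where the entropy numbers on the left and right are those of the same operator u regarded as mapping into C[0,1] (sup norm) and into L₂[0,1], respectively. -/
open MeasureTheory Filter Set

/-- The `n`-th entropy number of a bounded operator `u : E → F`: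
`e_n(u) = inf { ε > 0 : u(B_E) can be covered by 2^{n-1} closed balls of radius ε }`. -/
noncomputable def entropyNumber {E F : Type*} [NormedAddCommGroup E] [NormedSpace ℝ E]
    [NormedAddCommGroup F] [NormedSpace ℝ F] (u : E →L[ℝ] F) (n : ℕ) : ℝ :=
  sInf {ε : ℝ | 0 < ε ∧ ∃ f : Fin (2 ^ (n - 1)) → F,
    u '' Metric.closedBall 0 1 ⊆ ⋃ k, Metric.closedBall (f k) ε}

/-- The canonical embedding `C[0,1] → L₂[0,1]`. -/
noncomputable def toL2 : C(Set.Icc (0 : ℝ) 1, ℝ) →L[ℝ]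
    Lp ℝ 2 (volume : Measure (Set.Icc (0 : ℝ) 1)) :=
  ContinuousMap.toLp 2 volume ℝ

private lemma cont_of_holder {X : Type*} [MetricSpace X] (P : X → ℝ) (K l : ℝ)
    (hK : 0 ≤ K) (hl : 0 < l)
    (h : ∀ s t : X, |P t - P s| ≤ K * (dist t s) ^ l) : Continuous P := by
  rw [Metric.continuous_iff]
  intro b ε hε
  refine ⟨(ε/(K+1)) ^ (1/l), by positivity, fun a hab => ?_⟩
  have h1 : dist (P a) (P b) ≤ K * dist a b ^ l := by
    rw [Real.dist_eq]; exact h b a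
  have h2 : dist a b ^ l ≤ ε/(K+1) := by
    calc dist a b ^ l ≤ ((ε/(K+1)) ^ (1/l)) ^ l :=
          Real.rpow_le_rpow dist_nonneg hab.le hl.le
      _ = ε/(K+1) := by
          rw [← Real.rpow_mul (by positivity), one_div_mul_cancel hl.ne', Real.rpow_one]
  have h3 : K * (ε/(K+1)) < ε := by
    rw [mul_div_assoc', div_lt_iff₀ (by positivity)]; nlinarith
  calc dist (P a) (P b) ≤ K * (ε/(K+1)) :=
        h1.trans (mul_le_mul_of_nonneg_left h2 hK)
    _ < ε := h3

private lemma logstep (l a K L : ℝ) (hl0 : 0 < l) (ha : 0 < a) (hK : 0 < K) (hL : 0 < L)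
    (h : (a/2)^2 * (a/(2*K))^(1/l) ≤ L^2) :
    a ≤ 2 * K ^ (1/(2*l+1)) * L ^ (2*l/(2*l+1)) := by
  have hD : 0 < 2*l+1 := by linarith
  have hRpos : 0 < 2 * K ^ (1/(2*l+1)) * L ^ (2*l/(2*l+1)) := by positivity
  rw [← Real.log_le_log_iff ha hRpos]
  have hlogR : Real.log (2 * K ^ (1/(2*l+1)) * L ^ (2*l/(2*l+1)))
      = Real.log 2 + (1/(2*l+1)) * Real.log K + (2*l/(2*l+1)) * Real.log L := by
    rw [Real.log_mul (by positivity) (by positivity),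
      Real.log_mul (by positivity) (by positivity),
      Real.log_rpow hK, Real.log_rpow hL]
  rw [hlogR]
  have hlogh := Real.log_le_log (by positivity) h
  rw [Real.log_mul (by positivity) (by positivity), Real.log_pow,
    Real.log_rpow (by positivity), Real.log_div ha.ne' two_ne_zero,
    Real.log_div ha.ne' (by positivity), Real.log_pow,
    Real.log_mul two_ne_zero hK.ne'] at hlogh
  set A := Real.log a
  set B := Real.log K
  set C := Real.log L
  set c2 := Real.log 2
  push_cast at hlogh
  have h2 : 2*l*(A - c2) + (A - (c2 + B)) ≤ l*(2*C) := by
    have h1 := mul_le_mul_of_nonneg_left hlogh hl0.le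
    calc 2*l*(A-c2) + (A-(c2+B)) = l * (2*(A-c2) + 1/l*(A-(c2+B))) := by
          field_simp
      _ ≤ l*(2*C) := h1
  have h4 : A ≤ ((2*l+1)*c2 + B + 2*l*C)/(2*l+1) := by
    rw [le_div_iff₀ hD]; nlinarith
  calc A ≤ ((2*l+1)*c2 + B + 2*l*C)/(2*l+1) := h4
    _ = c2 + 1/(2*l+1) * B + 2*l/(2*l+1) * C := by field_simp

private lemma cheb_center (l : ℝ) (hl0 : 0 < l) (K : ℝ) (hK : 0 ≤ K)
    (A : Set C(Icc (0:ℝ) 1, ℝ)) (hne : A.Nonempty)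
    (hbd : ∀ φ ∈ A, ∀ t, |φ t| ≤ K)
    (hHol : ∀ φ ∈ A, ∀ s t : Icc (0:ℝ) 1, |φ t - φ s| ≤ K * (dist t s) ^ l)
    (r : ℝ) (hpair : ∀ φ ∈ A, ∀ ψ ∈ A, ∀ t, |φ t - ψ t| ≤ 2*r) :
    ∃ f : C(Icc (0:ℝ) 1, ℝ), ∀ φ ∈ A, ∀ t, |φ t - f t| ≤ r := by
  set P : Icc (0:ℝ) 1 → ℝ := fun t => sSup ((fun φ : C(Icc (0:ℝ) 1, ℝ) => φ t) '' A) with hP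
  set Q : Icc (0:ℝ) 1 → ℝ := fun t => sInf ((fun φ : C(Icc (0:ℝ) 1, ℝ) => φ t) '' A) with hQ
  have hbddA : ∀ t, BddAbove ((fun φ : C(Icc (0:ℝ) 1, ℝ) => φ t) '' A) := fun t =>
    ⟨K, by rintro y ⟨φ, hφ, rfl⟩; exact le_trans (le_abs_self _) (hbd φ hφ t)⟩
  have hbddB : ∀ t, BddBelow ((fun φ : C(Icc (0:ℝ) 1, ℝ) => φ t) '' A) := fun t =>
    ⟨-K, by rintro y ⟨φ, hφ, rfl⟩; exact (abs_le.1 (hbd φ hφ t)).1⟩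
  have hneim : ∀ t, ((fun φ : C(Icc (0:ℝ) 1, ℝ) => φ t) '' A).Nonempty := fun t => hne.image _
  have hPle : ∀ (t) (b : ℝ), (∀ φ ∈ A, φ t ≤ b) → P t ≤ b := fun t b hb =>
    csSup_le (hneim t) (by rintro y ⟨φ, hφ, rfl⟩; exact hb φ hφ)
  have hleP : ∀ φ ∈ A, ∀ t, φ t ≤ P t := fun φ hφ t => le_csSup (hbddA t) ⟨φ, hφ, rfl⟩
  have hleQ : ∀ (t) (b : ℝ), (∀ φ ∈ A, b ≤ φ t) → b ≤ Q t := fun t b hb =>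
    le_csInf (hneim t) (by rintro y ⟨φ, hφ, rfl⟩; exact hb φ hφ)
  have hQle : ∀ φ ∈ A, ∀ t, Q t ≤ φ t := fun φ hφ t => csInf_le (hbddB t) ⟨φ, hφ, rfl⟩
  have hPH : ∀ s t : Icc (0:ℝ) 1, |P t - P s| ≤ K * (dist t s) ^ l := by
    intro s t
    rw [abs_sub_le_iff]
    constructor
    · have h1 : P t ≤ P s + K * dist t s ^ l := hPle t _ (fun φ hφ => by
        have h2 := le_trans (le_abs_self _) (hHol φ hφ s t)
        have h3 := hleP φ hφ s
        linarith)
      linarith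
    · have h1 : P s ≤ P t + K * dist t s ^ l := hPle s _ (fun φ hφ => by
        have h2 := le_trans (le_abs_self _) (hHol φ hφ t s)
        have h3 := hleP φ hφ t
        rw [dist_comm] at h2
        linarith)
      linarith
  have hQH : ∀ s t : Icc (0:ℝ) 1, |Q t - Q s| ≤ K * (dist t s) ^ l := by
    intro s t
    rw [abs_sub_le_iff]
    constructor
    · have h1 : Q t - K * dist t s ^ l ≤ Q s := hleQ s _ (fun φ hφ => by
        have h2 := le_trans (le_abs_self _) (hHol φ hφ s t)
        have h3 := hQle φ hφ t
        linarith)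
      linarith
    · have h1 : Q s - K * dist t s ^ l ≤ Q t := hleQ t _ (fun φ hφ => by
        have h2 := le_trans (le_abs_self _) (hHol φ hφ t s)
        have h3 := hQle φ hφ s
        rw [dist_comm] at h2
        linarith)
      linarith
  have hPc : Continuous P := cont_of_holder P K l hK hl0 hPH
  have hQc : Continuous Q := cont_of_holder Q K l hK hl0 hQH
  refine ⟨⟨fun t => (P t + Q t)/2, (hPc.add hQc).div_const 2⟩, ?_⟩
  intro φ hφ t
  have h1 : P t ≤ φ t + 2*r := hPle t _ (fun ψ hψ => by
    have := le_trans (le_abs_self _) (hpair ψ hψ φ hφ t); linarith)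
  have h2 : φ t - 2*r ≤ Q t := hleQ t _ (fun ψ hψ => by
    have := le_trans (le_abs_self _) (hpair φ hφ ψ hψ t); linarith)
  have h3 := hleP φ hφ t
  have h4 := hQle φ hφ t
  simp only [ContinuousMap.coe_mk]
  rw [abs_le]
  constructor <;> [linarith; linarith]

private lemma holder_l2_bound (l : ℝ) (hl0 : 0 < l) (K : ℝ) (hK : 0 < K)
    (g : C(Icc (0:ℝ) 1, ℝ)) (hbd : ∀ t, |g t| ≤ K)
    (hHol : ∀ s t : Icc (0:ℝ) 1, |g t - g s| ≤ K * |(t:ℝ) - (s:ℝ)| ^ l)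
    (t₀ : Icc (0:ℝ) 1) :
    |g t₀| ≤ 2 * K ^ (1/(2*l+1)) * ‖toL2 g‖ ^ (2*l/(2*l+1)) := by
  rcases eq_or_lt_of_le (abs_nonneg (g t₀)) with h0 | hapos
  · rw [← h0]; positivity
  set a := |g t₀| with ha
  set L := ‖toL2 g‖ with hLdef
  have hcoe : (toL2 g : Icc (0:ℝ) 1 → ℝ) =ᵐ[(volume : Measure (Icc (0:ℝ) 1))] g :=
    ContinuousMap.coeFn_toLp (𝕜 := ℝ) volume g
  have hInt : Integrable (fun t => g t * g t) (volume : Measure (Icc (0:ℝ) 1)) := by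
    have h0 := MeasureTheory.L2.integrable_inner (𝕜 := ℝ) (toL2 g) (toL2 g)
    exact (by simpa [RCLike.inner_apply, conj_trivial, pow_two] using h0 :
      Integrable (fun t => (toL2 g) t * (toL2 g) t) _).congr (hcoe.mul hcoe)
  have hL2 : L^2 = ∫ t, g t * g t ∂(volume : Measure (Icc (0:ℝ) 1)) := by
    rw [hLdef, ← real_inner_self_eq_norm_sq, MeasureTheory.L2.inner_def]
    simp only [RCLike.inner_apply, conj_trivial]
    exact integral_congr_ae (hcoe.mul hcoe)
  set δ := (a/(2*K)) ^ (1/l) with hδ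
  have hδpos : 0 < δ := Real.rpow_pos_of_pos (by positivity) _
  have haK : a ≤ K := hbd t₀
  have hδ1 : δ ≤ 1 := Real.rpow_le_one (by positivity)
    (by rw [div_le_one (by positivity)]; linarith) (by positivity)
  have hδl : δ ^ l = a/(2*K) := by
    rw [hδ, ← Real.rpow_mul (by positivity), one_div_mul_cancel hl0.ne', Real.rpow_one]
  set c := min ((t₀ : ℝ)) (1 - δ) with hc
  have hc0 : 0 ≤ c := le_min t₀.2.1 (by linarith)
  have hcd1 : c + δ ≤ 1 := by
    have := min_le_right ((t₀:ℝ)) (1-δ); linarith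
  have hct₀ : c ≤ (t₀:ℝ) := min_le_left _ _
  have ht₀d : (t₀:ℝ) ≤ c + δ := by
    have h1 : (t₀:ℝ) - δ ≤ min ((t₀:ℝ)) (1-δ) :=
      le_min (by linarith) (by linarith [t₀.2.2])
    rw [hc]; linarith
  set T : Set (Icc (0:ℝ) 1) := Subtype.val ⁻¹' (Icc c (c+δ)) with hT
  have hTmeas : MeasurableSet T := measurable_subtype_coe measurableSet_Icc
  have hμT : (volume : Measure (Icc (0:ℝ) 1)) T = ENNReal.ofReal δ := by
    rw [hT, unitInterval.volume_def, comap_subtype_coe_apply measurableSet_Icc,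
      Subtype.image_preimage_coe,
      inter_eq_self_of_subset_right (Icc_subset_Icc hc0 hcd1), Real.volume_Icc]
    congr 1; ring
  have hpt : ∀ t ∈ T, (a/2)^2 ≤ g t * g t := by
    intro t ht
    have ht1 : c ≤ (t:ℝ) := ht.1
    have ht2 : (t:ℝ) ≤ c + δ := ht.2
    have htd : |(t₀:ℝ) - (t:ℝ)| ≤ δ := by
      rw [abs_le]; constructor <;> linarith
    have h5 : |g t₀ - g t| ≤ a/2 := by
      calc |g t₀ - g t| ≤ K * |(t₀:ℝ) - (t:ℝ)| ^ l := hHol t t₀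
        _ ≤ K * δ ^ l := mul_le_mul_of_nonneg_left
            (Real.rpow_le_rpow (abs_nonneg _) htd hl0.le) hK.le
        _ = a/2 := by rw [hδl]; field_simp
    have h6 : a/2 ≤ |g t| := by
      have h7 := abs_sub_abs_le_abs_sub (g t₀) (g t)
      rw [← ha] at h7
      linarith
    calc (a/2)^2 ≤ |g t|^2 := by
          have := pow_le_pow_left₀ (by positivity : (0:ℝ) ≤ a/2) h6 2
          exact this
      _ = g t * g t := by rw [sq_abs, sq]
  have hkey : (a/2)^2 * (a/(2*K))^(1/l) ≤ L^2 := by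
    have h7 : (a/2)^2 * ((volume : Measure (Icc (0:ℝ) 1)) T).toReal
        ≤ ∫ t in T, g t * g t ∂(volume : Measure (Icc (0:ℝ) 1)) :=
      setIntegral_ge_of_const_le_real hTmeas (by rw [hμT]; exact ENNReal.ofReal_ne_top)
        hpt hInt.integrableOn
    have h8 : ∫ t in T, g t * g t ∂(volume : Measure (Icc (0:ℝ) 1))
        ≤ ∫ t, g t * g t ∂(volume : Measure (Icc (0:ℝ) 1)) :=
      setIntegral_le_integral hInt (ae_of_all _ fun t => mul_self_nonneg _)
    have h9 : ((volume : Measure (Icc (0:ℝ) 1)) T).toReal = δ := by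
      rw [hμT, ENNReal.toReal_ofReal hδpos.le]
    rw [h9] at h7
    rw [hL2, ← hδ]
    linarith
  have hLpos : 0 < L := by
    rcases lt_or_ge 0 L with h | h
    · exact h
    · exfalso
      have hL0 : L = 0 := le_antisymm h (norm_nonneg _)
      rw [hL0] at hkey
      have : (0:ℝ) < (a/2)^2 * (a/(2*K))^(1/l) := by positivity
      simpa using lt_of_lt_of_le this hkey
  exact logstep l a K L hl0 hapos hK hLpos hkey

private lemma cover_step {E : Type*} [NormedAddCommGroup E] [NormedSpace ℝ E]
    (l : ℝ) (hl0 : 0 < l)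
    (u : E →L[ℝ] C(Icc (0:ℝ) 1, ℝ)) (M : ℝ) (hM0 : 0 < M)
    (hsup : ∀ x, ‖u x‖ ≤ M * ‖x‖)
    (hHol : ∀ (x : E) (s t : Icc (0:ℝ) 1), |u x t - u x s| ≤ M * ‖x‖ * |(t:ℝ) - (s:ℝ)| ^ l)
    (N : ℕ) (ε : ℝ) (hε : 0 < ε)
    (g : Fin N → Lp ℝ 2 (volume : Measure (Icc (0:ℝ) 1)))
    (hcov : (toL2.comp u) '' Metric.closedBall 0 1 ⊆ ⋃ k, Metric.closedBall (g k) ε) :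
    ∃ f : Fin N → C(Icc (0:ℝ) 1, ℝ), u '' Metric.closedBall 0 1 ⊆
      ⋃ k, Metric.closedBall (f k) (2 * M ^ (1/(2*l+1)) * ε ^ (2*l/(2*l+1))) := by
  classical
  set r := 2 * M ^ (1/(2*l+1)) * ε ^ (2*l/(2*l+1)) with hr
  have hrpos : 0 < r := by positivity
  set A : Fin N → Set C(Icc (0:ℝ) 1, ℝ) := fun k =>
    (fun x : E => u x) '' {x : E | ‖x‖ ≤ 1 ∧ dist (toL2 (u x)) (g k) ≤ ε} with hA
  -- pairwise bound
  have hpair : ∀ k, ∀ φ ∈ A k, ∀ ψ ∈ A k, ∀ t, |φ t - ψ t| ≤ 2 * r := by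
    rintro k φ ⟨x, ⟨hx1, hx2⟩, rfl⟩ ψ ⟨y, ⟨hy1, hy2⟩, rfl⟩ t
    have hxy : ‖x - y‖ ≤ 2 := le_trans (norm_sub_le x y) (by linarith)
    have hbd : ∀ s, |(u (x - y)) s| ≤ 2 * M := fun s => by
      have h1 : ‖(u (x - y)) s‖ ≤ ‖u (x - y)‖ := ContinuousMap.norm_coe_le_norm _ s
      have h2 := hsup (x - y)
      have h3 : M * ‖x - y‖ ≤ 2 * M := by nlinarith
      rw [Real.norm_eq_abs] at h1
      linarith
    have hHol2 : ∀ s t : Icc (0:ℝ) 1,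
        |(u (x - y)) t - (u (x - y)) s| ≤ 2 * M * |(t:ℝ) - (s:ℝ)| ^ l := fun s t => by
      refine le_trans (hHol (x - y) s t) ?_
      have h3 : M * ‖x - y‖ ≤ 2 * M := by nlinarith [norm_nonneg (x - y)]
      exact mul_le_mul_of_nonneg_right h3 (Real.rpow_nonneg (abs_nonneg _) l)
    have hnorm : ‖toL2 (u (x - y))‖ ≤ 2 * ε := by
      rw [map_sub u, map_sub toL2]
      calc ‖toL2 (u x) - toL2 (u y)‖ = dist (toL2 (u x)) (toL2 (u y)) := (dist_eq_norm _ _).symm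
        _ ≤ dist (toL2 (u x)) (g k) + dist (g k) (toL2 (u y)) := dist_triangle _ _ _
        _ ≤ ε + ε := add_le_add hx2 (by rw [dist_comm]; exact hy2)
        _ = 2 * ε := by ring
    have hmain := holder_l2_bound l hl0 (2*M) (by positivity) (u (x - y)) hbd hHol2 t
    have heq : |u x t - u y t| = |(u (x - y)) t| := by
      rw [map_sub u]; simp [ContinuousMap.sub_apply]
    rw [heq]
    have hθ : 0 ≤ 2*l/(2*l+1) := by positivity
    have step1 : (‖toL2 (u (x - y))‖ : ℝ) ^ (2*l/(2*l+1)) ≤ (2*ε) ^ (2*l/(2*l+1)) :=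
      Real.rpow_le_rpow (norm_nonneg _) hnorm hθ
    have step2 : |(u (x - y)) t| ≤ 2 * (2*M) ^ (1/(2*l+1)) * (2*ε) ^ (2*l/(2*l+1)) := by
      refine le_trans hmain ?_
      exact mul_le_mul_of_nonneg_left step1 (by positivity)
    have hexp : (1:ℝ)/(2*l+1) + 2*l/(2*l+1) = 1 := by
      rw [← add_div]
      rw [show (1:ℝ) + 2*l = 2*l+1 by ring, div_self (by positivity : (2*l+1) ≠ 0)]
    have h22 : (2:ℝ) ^ ((1:ℝ)/(2*l+1)) * 2 ^ (2*l/(2*l+1)) = 2 := by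
      rw [← Real.rpow_add (by norm_num : (0:ℝ) < 2), hexp, Real.rpow_one]
    have hfinal : 2 * (2*M) ^ ((1:ℝ)/(2*l+1)) * (2*ε) ^ (2*l/(2*l+1)) = 2 * r := by
      rw [hr, Real.mul_rpow (by norm_num) hM0.le, Real.mul_rpow (by norm_num) hε.le]
      calc 2 * ((2:ℝ) ^ ((1:ℝ)/(2*l+1)) * M ^ ((1:ℝ)/(2*l+1))) *
            ((2:ℝ) ^ (2*l/(2*l+1)) * ε ^ (2*l/(2*l+1)))
          = ((2:ℝ) ^ ((1:ℝ)/(2*l+1)) * 2 ^ (2*l/(2*l+1))) *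
            (2 * (M ^ ((1:ℝ)/(2*l+1)) * ε ^ (2*l/(2*l+1)))) := by ring
        _ = 2 * (2 * (M ^ ((1:ℝ)/(2*l+1)) * ε ^ (2*l/(2*l+1)))) := by rw [h22]
        _ = 2 * (2 * M ^ ((1:ℝ)/(2*l+1)) * ε ^ (2*l/(2*l+1))) := by ring
    rw [← hfinal]
    exact step2
  -- bounds needed by cheb_center
  have hbdA : ∀ k, ∀ φ ∈ A k, ∀ t, |φ t| ≤ M := by
    rintro k φ ⟨x, ⟨hx1, _⟩, rfl⟩ t
    have h1 : ‖(u x) t‖ ≤ ‖u x‖ := ContinuousMap.norm_coe_le_norm _ t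
    have h2 := hsup x
    have h3 : M * ‖x‖ ≤ M := by nlinarith
    rw [Real.norm_eq_abs] at h1
    linarith
  have hHolA : ∀ k, ∀ φ ∈ A k, ∀ s t : Icc (0:ℝ) 1, |φ t - φ s| ≤ M * (dist t s) ^ l := by
    rintro k φ ⟨x, ⟨hx1, _⟩, rfl⟩ s t
    have h1 := hHol x s t
    have h3 : M * ‖x‖ ≤ M := by nlinarith [norm_nonneg x]
    have h4 : M * ‖x‖ * |(t:ℝ) - (s:ℝ)| ^ l ≤ M * |(t:ℝ) - (s:ℝ)| ^ l :=
      mul_le_mul_of_nonneg_right h3 (Real.rpow_nonneg (abs_nonneg _) l)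
    rw [Subtype.dist_eq, Real.dist_eq]
    linarith
  have hcheb : ∀ k, (A k).Nonempty → ∃ f0 : C(Icc (0:ℝ) 1, ℝ),
      ∀ φ ∈ A k, ∀ t, |φ t - f0 t| ≤ r := fun k hk =>
    cheb_center l hl0 M hM0.le (A k) hk (hbdA k) (fun φ hφ s t => by
      have := hHolA k φ hφ s t
      simpa using this) r (hpair k)
  choose F hF using hcheb
  refine ⟨fun k => if h : (A k).Nonempty then F k h else 0, ?_⟩
  rintro φ ⟨x, hx, rfl⟩
  have hx1 : ‖x‖ ≤ 1 := by rwa [← mem_closedBall_zero_iff]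
  have hmem : (toL2.comp u) x ∈ ⋃ k, Metric.closedBall (g k) ε := hcov ⟨x, hx, rfl⟩
  obtain ⟨k, hk⟩ := mem_iUnion.1 hmem
  have hxk : u x ∈ A k := ⟨x, ⟨hx1, by simpa using hk⟩, rfl⟩
  have hne : (A k).Nonempty := ⟨u x, hxk⟩
  refine mem_iUnion.2 ⟨k, ?_⟩
  rw [Metric.mem_closedBall, dist_eq_norm]
  simp only [dif_pos hne]
  rw [ContinuousMap.norm_le _ hrpos.le]
  intro t
  rw [ContinuousMap.sub_apply, Real.norm_eq_abs]
  exact hF k hne (u x) hxk t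

/-- **Entropy interpolation via Hölder continuity.**
Let `E` be a real Banach space, `0 < λ ≤ 1`, and let `u : E → C_λ[0,1]` be a bounded operator
into the Hölder space, with `‖u : E → C_λ[0,1]‖ ≤ M` (expressed pointwise: for all `x` and all
`s < t` in `[0,1]`, `|u x (t) - u x (s)|/(t-s)^λ + ‖u x‖_∞ ≤ M ‖x‖`). Then for every `k ≥ 1`,
`e_k(u : E → C[0,1]) ≤ 2 M^{1/(2λ+1)} e_k(u : E → L₂[0,1])^{2λ/(2λ+1)}`. -/
theorem entropy_interpolation
    {E : Type*} [NormedAddCommGroup E] [NormedSpace ℝ E] [CompleteSpace E]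
    (l : ℝ) (hl0 : 0 < l) (hl1 : l ≤ 1)
    (u : E →L[ℝ] C(Set.Icc (0 : ℝ) 1, ℝ))
    (M : ℝ) (hM0 : 0 ≤ M)
    (hM : ∀ x : E, ∀ s t : Set.Icc (0 : ℝ) 1, (s : ℝ) < t →
      |u x t - u x s| / ((t : ℝ) - s) ^ l + ‖u x‖ ≤ M * ‖x‖) :
    ∀ k : ℕ, 1 ≤ k →
      entropyNumber u k ≤
        2 * M ^ ((1 : ℝ) / (2 * l + 1)) *
          entropyNumber (toL2.comp u) k ^ (2 * l / (2 * l + 1)) := by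
  intro k hk
  have hD : (0:ℝ) < 2*l+1 := by linarith
  -- derive sup norm bound
  have hz : (0:ℝ) ∈ Icc (0:ℝ) 1 := left_mem_Icc.mpr zero_le_one
  have ho : (1:ℝ) ∈ Icc (0:ℝ) 1 := right_mem_Icc.mpr zero_le_one
  have hsup : ∀ x, ‖u x‖ ≤ M * ‖x‖ := by
    intro x
    have h1 := hM x ⟨0, hz⟩ ⟨1, ho⟩ (by norm_num)
    have h2 : 0 ≤ |u x ⟨1, ho⟩ - u x ⟨0, hz⟩| / ((1:ℝ) - 0) ^ l :=
      div_nonneg (abs_nonneg _) (Real.rpow_nonneg (by norm_num) _)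
    push_cast at h1
    linarith
  have hHol : ∀ (x : E) (s t : Icc (0:ℝ) 1),
      |u x t - u x s| ≤ M * ‖x‖ * |(t:ℝ) - (s:ℝ)| ^ l := by
    intro x s t
    rcases lt_trichotomy ((s:ℝ)) ((t:ℝ)) with h | h | h
    · have h1 := hM x s t h
      have h2 : 0 < ((t:ℝ) - (s:ℝ)) ^ l := Real.rpow_pos_of_pos (by linarith) l
      have h3 : |u x t - u x s| / ((t:ℝ) - (s:ℝ)) ^ l ≤ M * ‖x‖ := by
        linarith [norm_nonneg (u x)]
      rw [div_le_iff₀ h2] at h3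
      rwa [abs_of_pos (by linarith : (0:ℝ) < (t:ℝ) - (s:ℝ))]
    · have hst : s = t := Subtype.ext h
      subst hst
      simp [Real.zero_rpow hl0.ne']
    · have h1 := hM x t s h
      have h2 : 0 < ((s:ℝ) - (t:ℝ)) ^ l := Real.rpow_pos_of_pos (by linarith) l
      have h3 : |u x s - u x t| / ((s:ℝ) - (t:ℝ)) ^ l ≤ M * ‖x‖ := by
        linarith [norm_nonneg (u x)]
      rw [div_le_iff₀ h2] at h3
      rw [abs_sub_comm ((t:ℝ)) ((s:ℝ)), abs_of_pos (by linarith : (0:ℝ) < (s:ℝ) - (t:ℝ)),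
        abs_sub_comm (u x t) (u x s)]
      exact h3
  -- set notation
  set S₁ : Set ℝ := {ε : ℝ | 0 < ε ∧ ∃ f : Fin (2 ^ (k - 1)) → C(Icc (0:ℝ) 1, ℝ),
    u '' Metric.closedBall 0 1 ⊆ ⋃ j, Metric.closedBall (f j) ε} with hS₁
  set S₂ : Set ℝ := {ε : ℝ | 0 < ε ∧ ∃ f : Fin (2 ^ (k - 1)) →
      Lp ℝ 2 (volume : Measure (Icc (0:ℝ) 1)),
    (toL2.comp u) '' Metric.closedBall 0 1 ⊆ ⋃ j, Metric.closedBall (f j) ε} with hS₂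
  have hE1 : entropyNumber u k = sInf S₁ := rfl
  have hE2 : entropyNumber (toL2.comp u) k = sInf S₂ := rfl
  have hS₁bdd : BddBelow S₁ := ⟨0, fun x hx => hx.1.le⟩
  have hS₂ne : S₂.Nonempty := by
    refine ⟨‖toL2.comp u‖ + 1, by positivity, fun _ => 0, ?_⟩
    rintro y ⟨x, hx, rfl⟩
    have hx1 : ‖x‖ ≤ 1 := by rwa [← mem_closedBall_zero_iff]
    refine mem_iUnion.2 ⟨⟨0, Nat.pow_pos (by norm_num)⟩, ?_⟩
    rw [Metric.mem_closedBall, dist_zero_right]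
    calc ‖(toL2.comp u) x‖ ≤ ‖toL2.comp u‖ * ‖x‖ := (toL2.comp u).le_opNorm x
      _ ≤ ‖toL2.comp u‖ * 1 := by
          exact mul_le_mul_of_nonneg_left hx1 (norm_nonneg _)
      _ ≤ ‖toL2.comp u‖ + 1 := by linarith [norm_nonneg (toL2.comp u)]
  rcases eq_or_lt_of_le hM0 with hMz | hMpos
  · -- M = 0 : u = 0
    have hu0 : ∀ x, u x = 0 := by
      intro x
      have h1 := hsup x
      rw [← hMz] at h1
      simp only [zero_mul] at h1
      exact norm_le_zero_iff.mp h1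
    have hLHS : entropyNumber u k ≤ 0 := by
      rw [hE1]
      refine le_of_forall_pos_le_add (fun ε hε => ?_)
      have hmem : ε ∈ S₁ := by
        refine ⟨hε, fun _ => 0, ?_⟩
        rintro y ⟨x, hx, rfl⟩
        refine mem_iUnion.2 ⟨⟨0, Nat.pow_pos (by norm_num)⟩, ?_⟩
        rw [hu0 x]
        exact Metric.mem_closedBall_self hε.le
      have := csInf_le hS₁bdd hmem
      linarith
    have hRHS : (0:ℝ) ≤ 2 * M ^ ((1:ℝ)/(2*l+1)) *
        entropyNumber (toL2.comp u) k ^ (2*l/(2*l+1)) := by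
      rw [← hMz, Real.zero_rpow (by positivity : (1:ℝ)/(2*l+1) ≠ 0)]
      simp
    linarith
  · -- M > 0
    set θ := 2*l/(2*l+1) with hθdef
    set θ' := (1:ℝ)/(2*l+1) with hθ'def
    have hθpos : 0 < θ := by positivity
    have e₂nonneg : 0 ≤ sInf S₂ := Real.sInf_nonneg (fun x hx => hx.1.le)
    have key : ∀ η > 0, entropyNumber u k ≤ 2 * M ^ θ' * (sInf S₂ + η) ^ θ := by
      intro η hη
      obtain ⟨ε, hεS, hεlt⟩ := Real.lt_sInf_add_pos hS₂ne hη
      obtain ⟨hεpos, g, hgcov⟩ := hεS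
      obtain ⟨f, hf⟩ := cover_step l hl0 u M hMpos hsup hHol (2^(k-1)) ε hεpos g hgcov
      have hmem : 2 * M ^ θ' * ε ^ θ ∈ S₁ := ⟨by positivity, f, hf⟩
      calc entropyNumber u k ≤ 2 * M ^ θ' * ε ^ θ := by
            rw [hE1]; exact csInf_le hS₁bdd hmem
        _ ≤ 2 * M ^ θ' * (sInf S₂ + η) ^ θ := by
            refine mul_le_mul_of_nonneg_left ?_ (by positivity)
            exact Real.rpow_le_rpow hεpos.le hεlt.le hθpos.le
    have hlim : Tendsto (fun η : ℝ => 2 * M ^ θ' * (sInf S₂ + η) ^ θ) (nhdsWithin 0 (Ioi 0))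
        (nhds (2 * M ^ θ' * (sInf S₂) ^ θ)) := by
      have h1 : Tendsto (fun η : ℝ => sInf S₂ + η) (nhdsWithin 0 (Ioi 0)) (nhds (sInf S₂)) := by
        have h2 : Tendsto (fun η : ℝ => sInf S₂ + η) (nhds 0) (nhds (sInf S₂ + 0)) :=
          (continuous_const.add continuous_id).tendsto 0
        rw [add_zero] at h2
        exact h2.mono_left nhdsWithin_le_nhds
      have h3 : ContinuousAt (fun x : ℝ => x ^ θ) (sInf S₂) :=
        Real.continuousAt_rpow_const (sInf S₂) θ (Or.inr hθpos.le)
      exact tendsto_const_nhds.mul (h3.tendsto.comp h1)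
    rw [hE2]
    exact ge_of_tendsto hlim (eventually_nhdsWithin_of_forall (fun η hη => key η hη))
end

section
/- Let E be a real Banach space, 0 < λ ≤ 1, and let u : E → C_λ[0,1] be a bounded linear operator. Then for every k ∈ ℕ and every 0 < δ ≤ 1, e_k(u : E → C[0,1]) ≤ δ^{-1/2} · e_k(u : E → L₂[0,1]) + δ^λ · ‖u : E → C_λ[0,1]‖. -/
open MeasureTheory Filter Set

noncomputable def repW (w : Lp ℝ 2 (volume : Measure (Set.Icc (0:ℝ) 1))) : ℝ → ℝ :=
  (Set.Icc (0:ℝ) 1).indicator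
    (fun s => (Lp.aestronglyMeasurable w).mk w (Set.projIcc 0 1 zero_le_one s))

noncomputable def repC (f : C(Set.Icc (0:ℝ) 1, ℝ)) : ℝ → ℝ :=
  (Set.Icc (0:ℝ) 1).indicator (fun s => f (Set.projIcc 0 1 zero_le_one s))

theorem repW_sm (w : Lp ℝ 2 (volume : Measure (Set.Icc (0:ℝ) 1))) :
    StronglyMeasurable (repW w) :=
  (((Lp.aestronglyMeasurable w).stronglyMeasurable_mk).comp_measurable
    continuous_projIcc.measurable).indicator measurableSet_Icc

theorem repC_sm (f : C(Set.Icc (0:ℝ) 1, ℝ)) : StronglyMeasurable (repC f) :=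
  ((map_continuous f).comp continuous_projIcc).stronglyMeasurable.indicator measurableSet_Icc

theorem repC_mem (f : C(Set.Icc (0:ℝ) 1, ℝ)) {s : ℝ} (hs : s ∈ Set.Icc (0:ℝ) 1) :
    repC f s = f ⟨s, hs⟩ := by
  simp only [repC, indicator_of_mem hs]
  rw [Set.projIcc_of_mem zero_le_one hs]

theorem repC_bound (f : C(Set.Icc (0:ℝ) 1, ℝ)) (s : ℝ) : ‖repC f s‖ ≤ ‖f‖ := by
  by_cases hs : s ∈ Set.Icc (0:ℝ) 1
  · rw [repC_mem f hs]; exact f.norm_coe_le_norm _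
  · simp [repC, indicator_of_notMem hs, norm_nonneg]

theorem repC_memℒp (f : C(Set.Icc (0:ℝ) 1, ℝ)) (μ' : Measure ℝ) [IsFiniteMeasure μ'] :
    MemLp (repC f) 2 μ' :=
  MemLp.of_bound (repC_sm f).aestronglyMeasurable ‖f‖
    (Eventually.of_forall (repC_bound f))

theorem repW_ae (w : Lp ℝ 2 (volume : Measure (Set.Icc (0:ℝ) 1))) :
    (fun a : Set.Icc (0:ℝ) 1 => repW w a.val) =ᵐ[volume] (w : Set.Icc (0:ℝ) 1 → ℝ) := by
  have h := (Lp.aestronglyMeasurable w).ae_eq_mk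
  filter_upwards [h] with a ha
  simp only [repW, indicator_of_mem a.2, projIcc_val, ha]

theorem repW_memℒp (w : Lp ℝ 2 (volume : Measure (Set.Icc (0:ℝ) 1))) :
    MemLp (repW w) 2 (volume.restrict (Set.Icc (0:ℝ) 1)) := by
  rw [← map_comap_subtype_coe measurableSet_Icc,
    (MeasurableEmbedding.subtype_coe measurableSet_Icc).memLp_map_measure_iff]
  exact (Lp.memLp w).ae_eq (repW_ae w).symm

theorem repW_memℒp' (w : Lp ℝ 2 (volume : Measure (Set.Icc (0:ℝ) 1)))
    {S : Set ℝ} (hS : S ⊆ Set.Icc (0:ℝ) 1) :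
    MemLp (repW w) 2 (volume.restrict S) :=
  (repW_memℒp w).mono_measure (Measure.restrict_mono hS le_rfl)

theorem finite_restrict {S : Set ℝ} (h : volume S < ⊤) :
    IsFiniteMeasure (volume.restrict S) :=
  ⟨by rwa [Measure.restrict_apply_univ]⟩

-- the key L2 identity
theorem sq_int_eq (f : C(Set.Icc (0:ℝ) 1, ℝ))
    (w : Lp ℝ 2 (volume : Measure (Set.Icc (0:ℝ) 1))) :
    ∫ s in Set.Icc (0:ℝ) 1, (repC f s - repW w s) ^ 2
      = ‖ContinuousMap.toLp 2 volume ℝ f - w‖ ^ 2 := by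
  rw [← MeasureTheory.integral_subtype_comap measurableSet_Icc
    (fun s => (repC f s - repW w s)^2)]
  have h1 : ∫ (a : Set.Icc (0:ℝ) 1), (repC f a.val - repW w a.val)^2
        ∂(Measure.comap Subtype.val volume)
      = ∫ (a : Set.Icc (0:ℝ) 1),
          ((ContinuousMap.toLp 2 volume ℝ f - w) a) * ((ContinuousMap.toLp 2 volume ℝ f - w) a)
        ∂volume := by
    refine integral_congr_ae ?_
    filter_upwards [repW_ae w, Lp.coeFn_sub (ContinuousMap.toLp 2 volume ℝ f) w,
      ContinuousMap.coeFn_toLp (p := 2) (μ := (volume : Measure (Set.Icc (0:ℝ) 1))) (𝕜 := ℝ) f]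
      with a h1 h2 h3
    rw [h2]; simp only [Pi.sub_apply, h3, h1, repC_mem f a.2]
    ring
  refine h1.trans ?_
  rw [← real_inner_self_eq_norm_sq, MeasureTheory.L2.inner_def]
  exact integral_congr_ae (Eventually.of_forall fun a => rfl)


theorem vol_Icc_fin : (volume (Set.Icc (0:ℝ) 1)) < ⊤ := by
  rw [Real.volume_Icc]; exact ENNReal.ofReal_lt_top

-- integrable on ℝ for indicator-type functions supported in Icc
theorem integrable_of_repfacts {g : ℝ → ℝ}
    (hsupp : ∀ s, s ∉ Set.Icc (0:ℝ) 1 → g s = 0)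
    (hint : IntegrableOn g (Set.Icc (0:ℝ) 1) volume) : Integrable g volume := by
  have : g = (Set.Icc (0:ℝ) 1).indicator g := by
    funext s
    by_cases hs : s ∈ Set.Icc (0:ℝ) 1
    · rw [indicator_of_mem hs]
    · rw [indicator_of_notMem hs, hsupp s hs]
  rw [this]
  exact hint.integrable_indicator measurableSet_Icc

theorem avg_continuous (W : ℝ → ℝ) (hW : Integrable W volume) (δ : ℝ) :
    Continuous fun t : Set.Icc (0:ℝ) 1 =>
      δ⁻¹ * ∫ s in (min t.val (1-δ))..(min t.val (1-δ) + δ), W s := by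
  have hF : Continuous (fun y => ∫ s in (0:ℝ)..y, W s) := hW.continuous_primitive 0
  have hA : Continuous (fun t : Set.Icc (0:ℝ) 1 => min t.val (1-δ)) :=
    continuous_subtype_val.min continuous_const
  have key : ∀ a b : ℝ, ∫ s in a..b, W s = (∫ s in (0:ℝ)..b, W s) - ∫ s in (0:ℝ)..a, W s :=
    fun a b => (intervalIntegral.integral_interval_sub_left
      hW.intervalIntegrable hW.intervalIntegrable).symm
  have heq : (fun t : Set.Icc (0:ℝ) 1 =>
      δ⁻¹ * ∫ s in (min t.val (1-δ))..(min t.val (1-δ) + δ), W s)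
      = fun t : Set.Icc (0:ℝ) 1 => δ⁻¹ *
        ((∫ s in (0:ℝ)..(min t.val (1-δ) + δ), W s) - ∫ s in (0:ℝ)..(min t.val (1-δ)), W s) :=
    funext fun t => by rw [key]
  rw [heq]
  exact continuous_const.mul ((hF.comp (hA.add continuous_const)).sub (hF.comp hA))

theorem repW_supp (w : Lp ℝ 2 (volume : Measure (Set.Icc (0:ℝ) 1))) :
    ∀ s, s ∉ Set.Icc (0:ℝ) 1 → repW w s = 0 :=
  fun _ hs => indicator_of_notMem hs _

theorem pointwise_est (l δ ε M : ℝ) (hl0 : 0 < l) (hδ0 : 0 < δ) (hδ1 : δ ≤ 1)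
    (hε : 0 ≤ ε) (hM0 : 0 ≤ M)
    (f : C(Set.Icc (0:ℝ) 1, ℝ)) (w : Lp ℝ 2 (volume : Measure (Set.Icc (0:ℝ) 1)))
    (hHol : ∀ s t : Set.Icc (0:ℝ) 1, |f t - f s| ≤ M * |(t:ℝ) - (s:ℝ)| ^ l)
    (hL2 : ‖ContinuousMap.toLp 2 volume ℝ f - w‖ ≤ ε)
    (t : Set.Icc (0:ℝ) 1) :
    |f t - δ⁻¹ * ∫ s in (min t.val (1-δ))..(min t.val (1-δ) + δ), repW w s|
      ≤ δ ^ (-(1:ℝ)/2) * ε + δ ^ l * M := by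
  set a : ℝ := min t.val (1-δ) with ha_def
  set b : ℝ := a + δ with hb_def
  have ha0 : 0 ≤ a := le_min t.2.1 (by linarith)
  have hat : a ≤ t.val := min_le_left _ _
  have htb : t.val ≤ b := by
    have h1 := t.2.2
    rcases le_total t.val (1-δ) with h | h
    · have : a = t.val := min_eq_left h
      rw [hb_def, this]; linarith
    · have : a = 1 - δ := min_eq_right h
      rw [hb_def, this]; linarith
  have hb1 : b ≤ 1 := by
    have := min_le_right t.val (1-δ); rw [hb_def]; linarith
  have hab : a ≤ b := by rw [hb_def]; linarith
  have hIocIcc : Set.Ioc a b ⊆ Set.Icc (0:ℝ) 1 :=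
    fun s hs => ⟨le_trans ha0 hs.1.le, le_trans hs.2 hb1⟩
  have hIocFin : volume (Set.Ioc a b) < ⊤ := by
    rw [Real.volume_Ioc]; exact ENNReal.ofReal_lt_top
  haveI := finite_restrict hIocFin
  haveI := finite_restrict vol_Icc_fin
  -- integrabilities
  have hWmem : MemLp (repW w) 2 (volume.restrict (Set.Ioc a b)) := repW_memℒp' w hIocIcc
  have hWIoc : IntegrableOn (repW w) (Set.Ioc a b) volume := hWmem.integrable one_le_two
  have hWi : IntervalIntegrable (repW w) volume a b :=
    (intervalIntegrable_iff_integrableOn_Ioc_of_le hab).2 hWIoc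
  have hD : MemLp (fun s => repC f s - repW w s) 2 (volume.restrict (Set.Ioc a b)) :=
    (repC_memℒp f _).sub hWmem
  have hDIoc : IntegrableOn (fun s => repC f s - repW w s) (Set.Ioc a b) volume :=
    hD.integrable one_le_two
  -- step 1: rewrite difference as an average
  have step1 : f t - δ⁻¹ * ∫ s in a..b, repW w s = δ⁻¹ * ∫ s in a..b, (f t - repW w s) := by
    rw [intervalIntegral.integral_sub intervalIntegrable_const hWi,
      intervalIntegral.integral_const]
    have hba : b - a = δ := by rw [hb_def]; ring
    rw [hba, smul_eq_mul]
    field_simp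
  rw [step1, abs_mul, abs_of_pos (inv_pos.2 hδ0)]
  -- step 2-3
  have step2 : |∫ s in a..b, (f t - repW w s)| ≤ ∫ s in Set.Ioc a b, |f t - repW w s| := by
    rw [← intervalIntegral.integral_of_le hab]
    exact intervalIntegral.abs_integral_le_integral_abs hab
  -- step 4
  have step4 : ∫ s in Set.Ioc a b, |f t - repW w s|
      ≤ ∫ s in Set.Ioc a b, (M * δ ^ l + |repC f s - repW w s|) := by
    refine setIntegral_mono_on ?_ ?_ measurableSet_Ioc ?_
    · exact (integrableOn_const hIocFin.ne).sub hWIoc |>.abs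
    · exact (integrableOn_const hIocFin.ne).add hDIoc.abs
    · intro s hs
      have hs01 : s ∈ Set.Icc (0:ℝ) 1 := hIocIcc hs
      have hrc : repC f s = f ⟨s, hs01⟩ := repC_mem f hs01
      have tri : |f t - repW w s| ≤ |f t - f ⟨s, hs01⟩| + |f ⟨s, hs01⟩ - repW w s| :=
        abs_sub_le _ _ _
      have hts : |(t:ℝ) - s| ≤ δ := by
        rw [abs_le]; constructor
        · linarith [hs.2, hat]
        · linarith [hs.1.le, htb]
      have hHol' : |f t - f ⟨s, hs01⟩| ≤ M * δ ^ l := by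
        refine le_trans (hHol _ _) ?_
        exact mul_le_mul_of_nonneg_left
          (Real.rpow_le_rpow (abs_nonneg _) hts hl0.le) hM0
      calc |f t - repW w s| ≤ |f t - f ⟨s, hs01⟩| + |f ⟨s, hs01⟩ - repW w s| := tri
        _ ≤ M * δ ^ l + |repC f s - repW w s| := by rw [hrc]; exact add_le_add_left hHol' _
  -- step 5
  have hvol : (volume.restrict (Set.Ioc a b)) Set.univ = ENNReal.ofReal δ := by
    rw [Measure.restrict_apply_univ, Real.volume_Ioc]
    congr 1; rw [hb_def]; ring
  have step5 : ∫ s in Set.Ioc a b, (M * δ ^ l + |repC f s - repW w s|)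
      = M * δ ^ l * δ + ∫ s in Set.Ioc a b, |repC f s - repW w s| := by
    rw [integral_add (integrableOn_const (C := M * δ ^ l) hIocFin.ne) hDIoc.abs, setIntegral_const,
      measureReal_def] at *
    · rw [Real.volume_Ioc, show b - a = δ by rw [hb_def]; ring,
        ENNReal.toReal_ofReal hδ0.le, smul_eq_mul, mul_comm]
  -- step 6: Cauchy-Schwarz
  have hconj : Real.HolderConjugate 2 2 := ⟨by norm_num, by norm_num, by norm_num⟩
  have htwo : (ENNReal.ofReal (2:ℝ)) = 2 := by
    rw [ENNReal.ofReal_ofNat]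
  have step6 : ∫ s in Set.Ioc a b, |repC f s - repW w s|
      ≤ (∫ s in Set.Ioc a b, |repC f s - repW w s| ^ (2:ℝ)) ^ ((1:ℝ)/2)
        * δ ^ ((1:ℝ)/2) := by
    have := MeasureTheory.integral_mul_norm_le_Lp_mul_Lq (μ := volume.restrict (Set.Ioc a b))
      (f := fun s => repC f s - repW w s) (g := fun _ => (1:ℝ)) hconj
      (htwo ▸ hD) (htwo ▸ memLp_const 1)
    simp only [norm_one, mul_one, Real.norm_eq_abs, Real.one_rpow] at this
    rw [integral_const, measureReal_def, hvol, ENNReal.toReal_ofReal hδ0.le, smul_eq_mul, mul_one] at this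
    exact this
  -- step 7-8: extend to [0,1] and identify with the L2 norm
  have habs_sq : ∀ s : ℝ, |repC f s - repW w s| ^ (2:ℝ) = (repC f s - repW w s) ^ 2 := by
    intro s
    rw [show ((2:ℝ)) = ((2:ℕ):ℝ) by norm_num, Real.rpow_natCast, sq_abs]
  have hDIcc : MemLp (fun s => repC f s - repW w s) 2
      (volume.restrict (Set.Icc (0:ℝ) 1)) := (repC_memℒp f _).sub (repW_memℒp' w (subset_refl _))
  have hsqIcc : IntegrableOn (fun s => (repC f s - repW w s) ^ 2) (Set.Icc (0:ℝ) 1) volume := by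
    have h := hDIcc.integrable_norm_rpow (by norm_num) (by norm_num)
    simp only [ENNReal.toReal_ofNat, Real.norm_eq_abs] at h
    exact h.congr (Eventually.of_forall fun s => habs_sq s)
  have step7 : ∫ s in Set.Ioc a b, |repC f s - repW w s| ^ (2:ℝ)
      ≤ ε ^ 2 := by
    have h1 : ∫ s in Set.Ioc a b, |repC f s - repW w s| ^ (2:ℝ)
        = ∫ s in Set.Ioc a b, (repC f s - repW w s) ^ 2 :=
      integral_congr_ae (Eventually.of_forall fun s => habs_sq s)
    rw [h1]
    calc ∫ s in Set.Ioc a b, (repC f s - repW w s) ^ 2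
        ≤ ∫ s in Set.Icc (0:ℝ) 1, (repC f s - repW w s) ^ 2 := by
          refine setIntegral_mono_set hsqIcc ?_ (HasSubset.Subset.eventuallyLE hIocIcc)
          exact Eventually.of_forall fun s => sq_nonneg _
      _ = ‖ContinuousMap.toLp 2 volume ℝ f - w‖ ^ 2 := sq_int_eq f w
      _ ≤ ε ^ 2 := by
          exact pow_le_pow_left₀ (norm_nonneg _) hL2 2
  have step9 : (∫ s in Set.Ioc a b, |repC f s - repW w s| ^ (2:ℝ)) ^ ((1:ℝ)/2) ≤ ε := by
    calc (∫ s in Set.Ioc a b, |repC f s - repW w s| ^ (2:ℝ)) ^ ((1:ℝ)/2)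
        ≤ (ε ^ 2) ^ ((1:ℝ)/2) := by
          refine Real.rpow_le_rpow ?_ step7 (by norm_num)
          exact integral_nonneg fun s => Real.rpow_nonneg (abs_nonneg _) _
      _ = ε := by
          rw [show (ε^2) = ε ^ ((2:ℕ):ℝ) by rw [Real.rpow_natCast],
            ← Real.rpow_mul hε]
          norm_num
  -- assemble
  have chain : |∫ s in a..b, (f t - repW w s)| ≤ M * δ ^ l * δ + ε * δ ^ ((1:ℝ)/2) := by
    refine le_trans step2 (le_trans step4 ?_)
    rw [step5]
    refine add_le_add_right ?_ _
    refine le_trans step6 ?_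
    exact mul_le_mul_of_nonneg_right step9 (Real.rpow_nonneg hδ0.le _)
  calc δ⁻¹ * |∫ s in a..b, (f t - repW w s)|
      ≤ δ⁻¹ * (M * δ ^ l * δ + ε * δ ^ ((1:ℝ)/2)) :=
        mul_le_mul_of_nonneg_left chain (inv_nonneg.2 hδ0.le)
    _ = δ ^ (-(1:ℝ)/2) * ε + δ ^ l * M := by
        have e1 : δ⁻¹ * (M * δ ^ l * δ) = δ ^ l * M := by
          field_simp
        have e2 : δ⁻¹ * (ε * δ ^ ((1:ℝ)/2)) = δ ^ (-(1:ℝ)/2) * ε := by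
          rw [show δ⁻¹ = δ ^ (-(1:ℝ)) from (Real.rpow_neg_one δ).symm,
            mul_comm ε, ← mul_assoc, ← Real.rpow_add hδ0]
          norm_num
        rw [mul_add, e1, e2]
        ring

/-- **Entropy estimate with the averaging parameter `δ`.**
Let `E` be a real Banach space, `0 < λ ≤ 1`, and let `u : E → C_λ[0,1]` be a bounded operator
into the Hölder space with `‖u : E → C_λ[0,1]‖ ≤ M` (expressed pointwise). Then for every
`k ≥ 1` and every `0 < δ ≤ 1`,
`e_k(u : E → C[0,1]) ≤ δ^{-1/2} e_k(u : E → L₂[0,1]) + δ^λ M`. -/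
theorem entropy_delta_estimate
    {E : Type*} [NormedAddCommGroup E] [NormedSpace ℝ E] [CompleteSpace E]
    (l : ℝ) (hl0 : 0 < l) (hl1 : l ≤ 1)
    (u : E →L[ℝ] C(Set.Icc (0 : ℝ) 1, ℝ))
    (M : ℝ) (hM0 : 0 ≤ M)
    (hM : ∀ x : E, ∀ s t : Set.Icc (0 : ℝ) 1, (s : ℝ) < t →
      |u x t - u x s| / ((t : ℝ) - s) ^ l + ‖u x‖ ≤ M * ‖x‖) :
    ∀ k : ℕ, 1 ≤ k → ∀ δ : ℝ, 0 < δ → δ ≤ 1 →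
      entropyNumber u k ≤
        δ ^ (-(1 : ℝ) / 2) * entropyNumber (toL2.comp u) k + δ ^ l * M := by
  intro k hk δ hδ0 hδ1
  -- Hölder bound for u x
  have holder : ∀ x : E, ‖x‖ ≤ 1 → ∀ s t : Set.Icc (0:ℝ) 1,
      |u x t - u x s| ≤ M * |(t:ℝ) - (s:ℝ)| ^ l := by
    have key : ∀ x : E, ‖x‖ ≤ 1 → ∀ s t : Set.Icc (0:ℝ) 1, (s:ℝ) < (t:ℝ) →
        |u x t - u x s| ≤ M * |(t:ℝ) - (s:ℝ)| ^ l := by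
      intro x hx s t hst
      have h := hM x s t hst
      have hpos : (0:ℝ) < ((t:ℝ) - (s:ℝ)) ^ l := Real.rpow_pos_of_pos (by linarith) l
      have h2 : |u x t - u x s| / ((t:ℝ) - (s:ℝ)) ^ l ≤ M * ‖x‖ := by
        have := norm_nonneg (u x); linarith
      have h3 : |u x t - u x s| ≤ M * ‖x‖ * ((t:ℝ) - (s:ℝ)) ^ l :=
        (div_le_iff₀ hpos).1 h2
      have h4 : M * ‖x‖ * ((t:ℝ) - (s:ℝ)) ^ l ≤ M * ((t:ℝ) - (s:ℝ)) ^ l := by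
        have : M * ‖x‖ ≤ M := by nlinarith
        exact mul_le_mul_of_nonneg_right this hpos.le
      rw [abs_of_pos (by linarith : (0:ℝ) < (t:ℝ) - (s:ℝ))]
      linarith
    intro x hx s t
    rcases lt_trichotomy (s:ℝ) (t:ℝ) with h | h | h
    · exact key x hx s t h
    · have : s = t := Subtype.ext h
      rw [this, sub_self, abs_zero]
      exact mul_nonneg hM0 (Real.rpow_nonneg (abs_nonneg _) _)
    · rw [abs_sub_comm, abs_sub_comm ((t:ℝ)) ((s:ℝ))]
      exact key x hx t s h
  -- the two sets
  set S2 := {ε : ℝ | 0 < ε ∧ ∃ f : Fin (2 ^ (k - 1)) → Lp ℝ 2 (volume : Measure (Set.Icc (0:ℝ) 1)),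
    (toL2.comp u) '' Metric.closedBall 0 1 ⊆ ⋃ j, Metric.closedBall (f j) ε} with hS2
  have hS2ne : S2.Nonempty := by
    refine ⟨‖toL2.comp u‖ + 1, by positivity, fun _ => 0, ?_⟩
    rintro _ ⟨x, hx, rfl⟩
    rw [Metric.mem_closedBall, dist_zero_right] at hx
    refine Set.mem_iUnion.2 ⟨⟨0, Nat.pow_pos (by norm_num)⟩, ?_⟩
    rw [Metric.mem_closedBall, dist_zero_right]
    calc ‖(toL2.comp u) x‖ ≤ ‖toL2.comp u‖ * ‖x‖ := (toL2.comp u).le_opNorm x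
      _ ≤ ‖toL2.comp u‖ * 1 := by
          exact mul_le_mul_of_nonneg_left hx (norm_nonneg _)
      _ ≤ ‖toL2.comp u‖ + 1 := by linarith
  -- main covering step
  have key : ∀ ε ∈ S2, entropyNumber u k ≤ δ ^ (-(1:ℝ)/2) * ε + δ ^ l * M := by
    rintro ε ⟨hε, g, hcov⟩
    refine csInf_le ⟨0, fun y hy => hy.1.le⟩ ?_
    have hδpow : (0:ℝ) < δ ^ (-(1:ℝ)/2) := Real.rpow_pos_of_pos hδ0 _
    refine ⟨by positivity, ?_⟩
    -- centers
    haveI := finite_restrict vol_Icc_fin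
    have hWint : ∀ j, Integrable (repW (g j)) volume := fun j =>
      integrable_of_repfacts (repW_supp (g j))
        ((repW_memℒp' (g j) (subset_refl _)).integrable one_le_two)
    refine ⟨fun j => ⟨fun t => δ⁻¹ *
      ∫ s in (min t.val (1-δ))..(min t.val (1-δ) + δ), repW (g j) s,
      avg_continuous _ (hWint j) δ⟩, ?_⟩
    rintro _ ⟨x, hx, rfl⟩
    rw [Metric.mem_closedBall, dist_zero_right] at hx
    obtain ⟨j, hj⟩ := Set.mem_iUnion.1 (hcov ⟨x, by
      rw [Metric.mem_closedBall, dist_zero_right]; exact hx, rfl⟩)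
    rw [Metric.mem_closedBall, dist_eq_norm] at hj
    refine Set.mem_iUnion.2 ⟨j, ?_⟩
    rw [Metric.mem_closedBall, dist_comm]
    refine (ContinuousMap.dist_le (by positivity)).2 fun t => ?_
    rw [dist_comm, Real.dist_eq]
    exact pointwise_est l δ ε M hl0 hδ0 hδ1 hε.le hM0 (u x) (g j)
      (fun s t => holder x hx s t) hj t
  -- conclude via infima
  have hfin : (entropyNumber u k - δ ^ l * M) / δ ^ (-(1:ℝ)/2)
      ≤ entropyNumber (toL2.comp u) k := by
    have hδpow : (0:ℝ) < δ ^ (-(1:ℝ)/2) := Real.rpow_pos_of_pos hδ0 _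
    refine le_csInf hS2ne fun ε hε => ?_
    rw [div_le_iff₀ hδpow]
    have := key ε hε
    nlinarith
  have hδpow : (0:ℝ) < δ ^ (-(1:ℝ)/2) := Real.rpow_pos_of_pos hδ0 _
  rw [div_le_iff₀ hδpow] at hfin
  nlinarith
end

section
/- Let α > β + 1/2 > 0 and set λ = min(α - β - 1/2, 1). Then there is a constant C = C(α,β) such that for all 0 ≤ s < t ≤ 1, ∫₀^∞ x^{2β} ( t^α e^{-xt} - s^α e^{-xs} )² dx ≤ C (t-s)^{2λ}. -/
open MeasureTheory Filter Set

lemma my_rpow_add_le_add_rpow {a b : ℝ} (p : ℝ) (ha : 0 ≤ a) (hb : 0 ≤ b)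
    (hp : 0 ≤ p) (hp1 : p ≤ 1) : (a + b) ^ p ≤ a ^ p + b ^ p := by
  have h := NNReal.rpow_add_le_add_rpow a.toNNReal b.toNNReal hp hp1
  rw [← NNReal.coe_le_coe] at h
  push_cast [NNReal.coe_rpow] at h
  rwa [Real.coe_toNNReal a ha, Real.coe_toNNReal b hb] at h

lemma my_intOn {p b : ℝ} (hp : -1 < p) (hb : 0 < b) :
    IntegrableOn (fun x : ℝ => x ^ p * Real.exp (-(b * x))) (Ioi 0) := by
  have h := integrableOn_rpow_mul_exp_neg_mul_rpow (p := 1) hp one_pos hb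
  simpa [Real.rpow_one, neg_mul] using h

lemma my_intVal {p b : ℝ} (hp : -1 < p) (hb : 0 < b) :
    ∫ x in Ioi (0:ℝ), x ^ p * Real.exp (-(b * x)) = (1 / b) ^ (p + 1) * Real.Gamma (p + 1) := by
  have h := Real.integral_rpow_mul_exp_neg_mul_Ioi (by linarith : (0:ℝ) < p + 1) hb
  rw [show p + 1 - 1 = p from by ring] at h
  exact h

lemma my_one_sub_exp {w l : ℝ} (hw : 0 ≤ w) (hl0 : 0 < l) (hl1 : l ≤ 1) :
    1 - Real.exp (-w) ≤ w ^ l := by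
  rcases le_total w 1 with h1 | h1
  · rcases eq_or_lt_of_le hw with rfl | hw0
    · simp [Real.zero_rpow hl0.ne']
    · have h2 : 1 - Real.exp (-w) ≤ w := by nlinarith [Real.add_one_le_exp (-w)]
      calc 1 - Real.exp (-w) ≤ w := h2
        _ = w ^ (1:ℝ) := (Real.rpow_one w).symm
        _ ≤ w ^ l := Real.rpow_le_rpow_of_exponent_ge hw0 h1 hl1
  · have h2 : (1:ℝ) ≤ w ^ l := Real.one_le_rpow h1 hl0.le
    nlinarith [Real.exp_pos (-w)]

/-- Key elementary inequality: `t^α - s^α ≤ max α 1 * ((t-s)^(min α 1) * t^(α - min α 1))`. -/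
lemma my_rpow_diff {α s t : ℝ} (hα : 0 < α) (hs : 0 ≤ s) (hst : s < t) :
    t ^ α - s ^ α ≤ max α 1 * ((t - s) ^ (min α 1) * t ^ (α - min α 1)) := by
  have ht0 : 0 < t := lt_of_le_of_lt hs hst
  have hts : 0 < t - s := sub_pos.2 hst
  rcases le_total α 1 with hα1 | hα1
  · rw [min_eq_left hα1]
    have h := my_rpow_add_le_add_rpow α hts.le hs hα.le hα1
    rw [show t - s + s = t from by ring] at h
    have h0 : (0:ℝ) ≤ (t - s) ^ α := Real.rpow_nonneg hts.le _
    have h1 : t ^ (α - α) = 1 := by rw [sub_self, Real.rpow_zero]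
    rw [h1]
    have hM : (1:ℝ) ≤ max α 1 := le_max_right _ _
    nlinarith
  · rw [min_eq_right hα1, max_eq_left hα1]
    have hr1 : s / t ≤ 1 := (div_le_one ht0).2 hst.le
    have hr0 : 0 ≤ s / t := div_nonneg hs ht0.le
    have hb := one_add_mul_self_le_rpow_one_add (s := s / t - 1) (by linarith) hα1
    rw [show 1 + (s / t - 1) = s / t from by ring] at hb
    have htα : (0:ℝ) < t ^ α := Real.rpow_pos_of_pos ht0 _
    have h2 : t ^ α * (1 + α * (s / t - 1)) ≤ t ^ α * (s / t) ^ α :=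
      mul_le_mul_of_nonneg_left hb htα.le
    have h3 : t ^ α * (s / t) ^ α = s ^ α := by
      rw [← Real.mul_rpow ht0.le hr0]
      congr 1
      field_simp
    rw [h3, mul_add, mul_one] at h2
    have h5 : t ^ (α - 1) = t ^ α / t := by rw [Real.rpow_sub ht0, Real.rpow_one]
    have hid : t ^ α * (α * (s / t - 1)) = -(α * ((t - s) * (t ^ α / t))) := by
      field_simp
      ring
    rw [Real.rpow_one, h5]
    linarith [h2, hid.le, hid.ge]

set_option maxHeartbeats 1000000 in
/-- **Hölder bound for the increment variance of the kernels.**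
Let `α > β + 1/2 > 0` and `λ = min(α - β - 1/2, 1)`. Then there is `C = C(α,β)` such that for
all `0 ≤ s < t ≤ 1`, `∫₀^∞ x^{2β} (t^α e^{-xt} - s^α e^{-xs})² dx ≤ C (t-s)^{2λ}`
(with the convention `0^α e^{-x·0} = 0` for `s = 0`, which holds automatically since
`0^α = 0` for `α > 0`). -/
theorem increment_variance_holder_bound
    (α β : ℝ) (hβ : 0 < β + 1 / 2) (hαβ : β + 1 / 2 < α) :
    ∃ C : ℝ, ∀ s t : ℝ, 0 ≤ s → s < t → t ≤ 1 →
      ∫ x in Set.Ioi (0 : ℝ),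
          x ^ (2 * β) * (t ^ α * Real.exp (-(x * t)) - s ^ α * Real.exp (-(x * s))) ^ 2 ≤
        C * (t - s) ^ (2 * min (α - β - 1 / 2) 1) := by
  have hα : 0 < α := lt_trans hβ hαβ
  set γ := α - β - 1 / 2 with hγdef
  have hγ : 0 < γ := by rw [hγdef]; linarith
  set l := min γ 1 with hldef
  have hl0 : 0 < l := lt_min hγ one_pos
  have hl1 : l ≤ 1 := min_le_right _ _
  have hlγ : l ≤ γ := min_le_left _ _
  have hβ2 : (-1:ℝ) < 2 * β := by linarith
  have hβ2l : (-1:ℝ) < 2 * β + 2 * l := by linarith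
  set m := min α 1 with hmdef
  have hm0 : 0 < m := lt_min hα one_pos
  have hm1 : m ≤ 1 := min_le_right _ _
  have hmα : m ≤ α := min_le_left _ _
  have hlm : l ≤ m := le_min (le_trans hlγ (by rw [hγdef]; linarith)) hl1
  set M := max α 1 with hMdef
  have hM1 : (1:ℝ) ≤ M := le_max_right _ _
  have hΓ1 : 0 < Real.Gamma (2 * β + 1) := Real.Gamma_pos_of_pos (by linarith)
  have hΓ2 : 0 < Real.Gamma (2 * β + 2 * l + 1) := Real.Gamma_pos_of_pos (by linarith)
  refine ⟨2 * M ^ 2 * ((1/2 : ℝ) ^ (2 * β + 1) * Real.Gamma (2 * β + 1))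
      + 2 * ((1/2 : ℝ) ^ (2 * β + 2 * l + 1) * Real.Gamma (2 * β + 2 * l + 1)),
    fun s t hs hst ht1 => ?_⟩
  have ht0 : 0 < t := lt_of_le_of_lt hs hst
  have hts : 0 < t - s := sub_pos.2 hst
  have hts1 : t - s ≤ 1 := by linarith
  set c₁ := (t ^ α - s ^ α) ^ 2 with hc₁
  set c₂ := s ^ (2 * α) * (t - s) ^ (2 * l) with hc₂
  have hc₁0 : 0 ≤ c₁ := sq_nonneg _
  have hc₂0 : 0 ≤ c₂ :=
    mul_nonneg (Real.rpow_nonneg hs _) (Real.rpow_nonneg hts.le _)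
  -- the comparison functions
  have hIntA : IntegrableOn
      (fun x : ℝ => 2 * c₁ * (x ^ (2 * β) * Real.exp (-(2 * t * x)))) (Ioi 0) :=
    (my_intOn hβ2 (by linarith)).const_mul _
  have hIntB : IntegrableOn
      (fun x : ℝ => 2 * c₂ * (x ^ (2 * β + 2 * l) * Real.exp (-(2 * s * x)))) (Ioi 0) := by
    rcases eq_or_lt_of_le hs with rfl | hs0
    · have hz : c₂ = 0 := by
        rw [hc₂, Real.zero_rpow (by positivity), zero_mul]
      have : (fun x : ℝ => 2 * c₂ * (x ^ (2 * β + 2 * l) * Real.exp (-(2 * 0 * x))))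
          = fun _ => (0:ℝ) := funext fun x => by rw [hz]; ring
      rw [this]
      exact integrable_zero _ _ _
    · exact (my_intOn hβ2l (by linarith)).const_mul _
  -- pointwise bound
  have hpt : ∀ x ∈ Ioi (0:ℝ),
      x ^ (2 * β) * (t ^ α * Real.exp (-(x * t)) - s ^ α * Real.exp (-(x * s))) ^ 2 ≤
      2 * c₁ * (x ^ (2 * β) * Real.exp (-(2 * t * x)))
        + 2 * c₂ * (x ^ (2 * β + 2 * l) * Real.exp (-(2 * s * x))) := by
    intro x hx
    have hx0 : 0 < x := hx
    have hEst : Real.exp (-(x * t)) ≤ Real.exp (-(x * s)) := by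
      apply Real.exp_le_exp.2; nlinarith
    have hD0 : 0 ≤ Real.exp (-(x * s)) - Real.exp (-(x * t)) := sub_nonneg.2 hEst
    have h1 : (t ^ α * Real.exp (-(x * t)) - s ^ α * Real.exp (-(x * s))) ^ 2 ≤
        2 * ((t ^ α - s ^ α) * Real.exp (-(x * t))) ^ 2
          + 2 * (s ^ α * (Real.exp (-(x * s)) - Real.exp (-(x * t)))) ^ 2 := by
      nlinarith [sq_nonneg ((t ^ α - s ^ α) * Real.exp (-(x * t))
        + s ^ α * (Real.exp (-(x * s)) - Real.exp (-(x * t))))]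
    -- bound on the exponential difference
    have hsplit : Real.exp (-(x * t)) = Real.exp (-(x * s)) * Real.exp (-(x * (t - s))) := by
      rw [← Real.exp_add]; congr 1; ring
    have h2 : Real.exp (-(x * s)) - Real.exp (-(x * t)) ≤
        Real.exp (-(x * s)) * (x * (t - s)) ^ l := by
      rw [hsplit]
      have h3 : 1 - Real.exp (-(x * (t - s))) ≤ (x * (t - s)) ^ l :=
        my_one_sub_exp (by positivity) hl0 hl1
      nlinarith [Real.exp_pos (-(x * s))]
    have h2sq : (Real.exp (-(x * s)) - Real.exp (-(x * t))) ^ 2 ≤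
        Real.exp (-(x * s)) ^ 2 * ((x * (t - s)) ^ l) ^ 2 := by
      have := pow_le_pow_left₀ hD0 h2 2
      calc (Real.exp (-(x * s)) - Real.exp (-(x * t))) ^ 2
          ≤ (Real.exp (-(x * s)) * (x * (t - s)) ^ l) ^ 2 := this
        _ = Real.exp (-(x * s)) ^ 2 * ((x * (t - s)) ^ l) ^ 2 := by rw [mul_pow]
    have hxl : ((x * (t - s)) ^ l) ^ 2 = x ^ (2 * l) * (t - s) ^ (2 * l) := by
      rw [Real.mul_rpow hx0.le hts.le, mul_pow, sq, sq,
        ← Real.rpow_add hx0, ← Real.rpow_add hts, ← two_mul]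
    have hEt2 : Real.exp (-(x * t)) ^ 2 = Real.exp (-(2 * t * x)) := by
      rw [sq, ← Real.exp_add]; congr 1; ring
    have hEs2 : Real.exp (-(x * s)) ^ 2 = Real.exp (-(2 * s * x)) := by
      rw [sq, ← Real.exp_add]; congr 1; ring
    have hsα : (s ^ α) ^ 2 = s ^ (2 * α) := by
      rw [sq, two_mul, Real.rpow_add' hs (by positivity)]
    have hxx : x ^ (2 * β) * x ^ (2 * l) = x ^ (2 * β + 2 * l) :=
      (Real.rpow_add hx0 _ _).symm
    have hxb : (0:ℝ) ≤ x ^ (2 * β) := Real.rpow_nonneg hx0.le _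
    calc x ^ (2 * β) * (t ^ α * Real.exp (-(x * t)) - s ^ α * Real.exp (-(x * s))) ^ 2
        ≤ x ^ (2 * β) * (2 * ((t ^ α - s ^ α) * Real.exp (-(x * t))) ^ 2
          + 2 * (s ^ α * (Real.exp (-(x * s)) - Real.exp (-(x * t)))) ^ 2) :=
          mul_le_mul_of_nonneg_left h1 hxb
      _ = 2 * c₁ * (x ^ (2 * β) * Real.exp (-(x * t)) ^ 2)
          + 2 * (s ^ α) ^ 2 * (x ^ (2 * β)
            * (Real.exp (-(x * s)) - Real.exp (-(x * t))) ^ 2) := by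
          rw [hc₁]; ring
      _ ≤ 2 * c₁ * (x ^ (2 * β) * Real.exp (-(x * t)) ^ 2)
          + 2 * (s ^ α) ^ 2 * (x ^ (2 * β)
            * (Real.exp (-(x * s)) ^ 2 * (x ^ (2 * l) * (t - s) ^ (2 * l)))) := by
          have h10 := h2sq
          rw [hxl] at h10
          exact add_le_add le_rfl (mul_le_mul_of_nonneg_left
            (mul_le_mul_of_nonneg_left h10 hxb) (by positivity))
      _ = 2 * c₁ * (x ^ (2 * β) * Real.exp (-(2 * t * x)))
          + 2 * c₂ * (x ^ (2 * β + 2 * l) * Real.exp (-(2 * s * x))) := by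
          rw [← hxx, hc₂, ← hsα, ← hEt2, ← hEs2]; ring
  -- the two integral bounds
  have hA : ∫ x in Ioi (0:ℝ), 2 * c₁ * (x ^ (2 * β) * Real.exp (-(2 * t * x)))
      ≤ 2 * M ^ 2 * ((1/2 : ℝ) ^ (2 * β + 1) * Real.Gamma (2 * β + 1))
        * (t - s) ^ (2 * l) := by
    rw [integral_const_mul, my_intVal hβ2 (by linarith),
      show 2 * β + 1 = (2 * β) + 1 from rfl]
    have hsplit2 : (1 / (2 * t)) ^ (2 * β + 1)
        = (1/2 : ℝ) ^ (2 * β + 1) * t ^ (-(2 * β + 1)) := by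
      rw [show 1 / (2 * t) = (1/2 : ℝ) * t⁻¹ from by ring,
        Real.mul_rpow (by norm_num) (inv_nonneg.2 ht0.le),
        Real.inv_rpow ht0.le, ← Real.rpow_neg ht0.le]
    -- the core estimate
    have hkey := my_rpow_diff hα hs hst
    have hdiff0 : 0 ≤ t ^ α - s ^ α :=
      sub_nonneg.2 (Real.rpow_le_rpow hs hst.le hα.le)
    have hkey2 : c₁ ≤ M ^ 2 * ((t - s) ^ (2 * m) * t ^ (2 * α - 2 * m)) := by
      have h := mul_self_le_mul_self hdiff0 hkey
      have e1 : (t - s) ^ m * (t - s) ^ m = (t - s) ^ (2 * m) := by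
        rw [← Real.rpow_add hts, ← two_mul]
      have e2 : t ^ (α - m) * t ^ (α - m) = t ^ (2 * α - 2 * m) := by
        rw [← Real.rpow_add ht0]; congr 1; ring
      calc c₁ = (t ^ α - s ^ α) * (t ^ α - s ^ α) := by rw [hc₁, sq]
        _ ≤ (M * ((t - s) ^ m * t ^ (α - m))) * (M * ((t - s) ^ m * t ^ (α - m))) := h
        _ = M ^ 2 * (((t - s) ^ m * (t - s) ^ m) * (t ^ (α - m) * t ^ (α - m))) := by ring
        _ = M ^ 2 * ((t - s) ^ (2 * m) * t ^ (2 * α - 2 * m)) := by rw [e1, e2]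
    have hcore : (t - s) ^ (2 * m) * t ^ (2 * α - 2 * m) * t ^ (-(2 * β + 1))
        ≤ (t - s) ^ (2 * l) := by
      have e1 : t ^ (2 * α - 2 * m) * t ^ (-(2 * β + 1)) = t ^ (2 * γ - 2 * m) := by
        rw [← Real.rpow_add ht0]; congr 1; rw [hγdef]; ring
      have e2 : (t - s) ^ (2 * m) = (t - s) ^ (2 * l) * (t - s) ^ (2 * m - 2 * l) := by
        rw [← Real.rpow_add hts]; congr 1; ring
      have e3 : (t - s) ^ (2 * m - 2 * l) ≤ t ^ (2 * m - 2 * l) :=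
        Real.rpow_le_rpow hts.le (by linarith) (by linarith)
      have e4 : t ^ (2 * m - 2 * l) * t ^ (2 * γ - 2 * m) = t ^ (2 * γ - 2 * l) := by
        rw [← Real.rpow_add ht0]; congr 1; ring
      have e5 : t ^ (2 * γ - 2 * l) ≤ 1 :=
        Real.rpow_le_one ht0.le ht1 (by linarith)
      have h6 : (0:ℝ) ≤ t ^ (2 * γ - 2 * m) := Real.rpow_nonneg ht0.le _
      have h7 : (0:ℝ) ≤ (t - s) ^ (2 * l) := Real.rpow_nonneg hts.le _
      calc (t - s) ^ (2 * m) * t ^ (2 * α - 2 * m) * t ^ (-(2 * β + 1))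
          = (t - s) ^ (2 * m) * t ^ (2 * γ - 2 * m) := by rw [mul_assoc, e1]
        _ = (t - s) ^ (2 * l) * ((t - s) ^ (2 * m - 2 * l) * t ^ (2 * γ - 2 * m)) := by
            rw [e2]; ring
        _ ≤ (t - s) ^ (2 * l) * (t ^ (2 * m - 2 * l) * t ^ (2 * γ - 2 * m)) := by
            have := mul_le_mul_of_nonneg_right e3 h6
            exact mul_le_mul_of_nonneg_left this h7
        _ = (t - s) ^ (2 * l) * t ^ (2 * γ - 2 * l) := by rw [e4]
        _ ≤ (t - s) ^ (2 * l) * 1 := mul_le_mul_of_nonneg_left e5 h7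
        _ = (t - s) ^ (2 * l) := mul_one _
    have hc : c₁ * t ^ (-(2 * β + 1)) ≤ M ^ 2 * (t - s) ^ (2 * l) := by
      have h8 : (0:ℝ) ≤ t ^ (-(2 * β + 1)) := Real.rpow_nonneg ht0.le _
      calc c₁ * t ^ (-(2 * β + 1))
          ≤ M ^ 2 * ((t - s) ^ (2 * m) * t ^ (2 * α - 2 * m)) * t ^ (-(2 * β + 1)) :=
            mul_le_mul_of_nonneg_right hkey2 h8
        _ = M ^ 2 * ((t - s) ^ (2 * m) * t ^ (2 * α - 2 * m) * t ^ (-(2 * β + 1))) := by ring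
        _ ≤ M ^ 2 * (t - s) ^ (2 * l) :=
            mul_le_mul_of_nonneg_left hcore (by positivity)
    rw [hsplit2]
    have h9 : (0:ℝ) ≤ 2 * ((1/2 : ℝ) ^ (2 * β + 1) * Real.Gamma (2 * β + 1)) := by positivity
    calc 2 * c₁ * ((1/2 : ℝ) ^ (2 * β + 1) * t ^ (-(2 * β + 1)) * Real.Gamma (2 * β + 1))
        = (2 * ((1/2 : ℝ) ^ (2 * β + 1) * Real.Gamma (2 * β + 1)))
          * (c₁ * t ^ (-(2 * β + 1))) := by ring
      _ ≤ (2 * ((1/2 : ℝ) ^ (2 * β + 1) * Real.Gamma (2 * β + 1)))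
          * (M ^ 2 * (t - s) ^ (2 * l)) := mul_le_mul_of_nonneg_left hc h9
      _ = 2 * M ^ 2 * ((1/2 : ℝ) ^ (2 * β + 1) * Real.Gamma (2 * β + 1))
          * (t - s) ^ (2 * l) := by ring
  have hB : ∫ x in Ioi (0:ℝ), 2 * c₂ * (x ^ (2 * β + 2 * l) * Real.exp (-(2 * s * x)))
      ≤ 2 * ((1/2 : ℝ) ^ (2 * β + 2 * l + 1) * Real.Gamma (2 * β + 2 * l + 1))
        * (t - s) ^ (2 * l) := by
    rcases eq_or_lt_of_le hs with rfl | hs0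
    · have hz : c₂ = 0 := by
        rw [hc₂, Real.zero_rpow (by positivity), zero_mul]
      have hfn : (fun x : ℝ => 2 * c₂ * (x ^ (2 * β + 2 * l) * Real.exp (-(2 * 0 * x))))
          = fun _ => (0:ℝ) := funext fun x => by rw [hz]; ring
      rw [hfn, integral_zero]
      positivity
    · rw [integral_const_mul, my_intVal hβ2l (by linarith)]
      have hsplit2 : (1 / (2 * s)) ^ (2 * β + 2 * l + 1)
          = (1/2 : ℝ) ^ (2 * β + 2 * l + 1) * s ^ (-(2 * β + 2 * l + 1)) := by
        rw [show 1 / (2 * s) = (1/2 : ℝ) * s⁻¹ from by ring,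
          Real.mul_rpow (by norm_num) (inv_nonneg.2 hs0.le),
          Real.inv_rpow hs0.le, ← Real.rpow_neg hs0.le]
      have hsle : s ^ (2 * α) * s ^ (-(2 * β + 2 * l + 1)) ≤ 1 := by
        rw [← Real.rpow_add hs0]
        exact Real.rpow_le_one hs0.le (by linarith) (by rw [hγdef] at hlγ; linarith)
      have h7 : (0:ℝ) ≤ (t - s) ^ (2 * l) := Real.rpow_nonneg hts.le _
      have h9 : (0:ℝ) ≤ 2 * ((1/2 : ℝ) ^ (2 * β + 2 * l + 1)
        * Real.Gamma (2 * β + 2 * l + 1)) * (t - s) ^ (2 * l) := by positivity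
      rw [hsplit2, hc₂]
      calc 2 * (s ^ (2 * α) * (t - s) ^ (2 * l))
            * ((1/2 : ℝ) ^ (2 * β + 2 * l + 1) * s ^ (-(2 * β + 2 * l + 1))
              * Real.Gamma (2 * β + 2 * l + 1))
          = (2 * ((1/2 : ℝ) ^ (2 * β + 2 * l + 1) * Real.Gamma (2 * β + 2 * l + 1))
              * (t - s) ^ (2 * l)) * (s ^ (2 * α) * s ^ (-(2 * β + 2 * l + 1))) := by ring
        _ ≤ (2 * ((1/2 : ℝ) ^ (2 * β + 2 * l + 1) * Real.Gamma (2 * β + 2 * l + 1))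
              * (t - s) ^ (2 * l)) * 1 := mul_le_mul_of_nonneg_left hsle h9
        _ = 2 * ((1/2 : ℝ) ^ (2 * β + 2 * l + 1) * Real.Gamma (2 * β + 2 * l + 1))
              * (t - s) ^ (2 * l) := mul_one _
  -- put it together
  calc ∫ x in Ioi (0:ℝ),
        x ^ (2 * β) * (t ^ α * Real.exp (-(x * t)) - s ^ α * Real.exp (-(x * s))) ^ 2
      ≤ ∫ x in Ioi (0:ℝ), (2 * c₁ * (x ^ (2 * β) * Real.exp (-(2 * t * x)))
          + 2 * c₂ * (x ^ (2 * β + 2 * l) * Real.exp (-(2 * s * x)))) := by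
        refine integral_mono_of_nonneg ?_ (hIntA.add hIntB) ?_
        · filter_upwards [ae_restrict_mem measurableSet_Ioi] with x hx
          exact mul_nonneg (Real.rpow_nonneg (le_of_lt hx) _) (sq_nonneg _)
        · filter_upwards [ae_restrict_mem measurableSet_Ioi] with x hx
          exact hpt x hx
    _ = (∫ x in Ioi (0:ℝ), 2 * c₁ * (x ^ (2 * β) * Real.exp (-(2 * t * x))))
        + ∫ x in Ioi (0:ℝ), 2 * c₂ * (x ^ (2 * β + 2 * l) * Real.exp (-(2 * s * x))) :=
        integral_add hIntA hIntB
    _ ≤ 2 * M ^ 2 * ((1/2 : ℝ) ^ (2 * β + 1) * Real.Gamma (2 * β + 1)) * (t - s) ^ (2 * l)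
        + 2 * ((1/2 : ℝ) ^ (2 * β + 2 * l + 1) * Real.Gamma (2 * β + 2 * l + 1))
          * (t - s) ^ (2 * l) := add_le_add hA hB
    _ = (2 * M ^ 2 * ((1/2 : ℝ) ^ (2 * β + 1) * Real.Gamma (2 * β + 1))
        + 2 * ((1/2 : ℝ) ^ (2 * β + 2 * l + 1) * Real.Gamma (2 * β + 2 * l + 1)))
          * (t - s) ^ (2 * l) := by ring
end
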